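/- Let N ≥ 2, α = 1/(N-1), k ≥ 3, ε ∈ (0,1), and define u(p_1) = 1 - (k-1)p_1^{-α} / ((k-1)p_1^{-α} + (1 + p_1 - ε - k p_1)^{-α}) on the interval (1-ε)/k ≤ p_1 < (1-ε)/(k-1). Then u is a strictly increasing function of p_1 on this interval. -/
import Mathlib


theorem case_k_upper_bound_increasing (N k : ℕ) (hN : 2 ≤ N) (hk : 3 ≤ k)
    (ε : ℝ) (hε : ε ∈ Set.Ioo (0:ℝ) 1) :
    StrictMonoOn (fun p1 : ℝ =>
      1 - ((k:ℝ) - 1) * p1 ^ (-(1:ℝ)/((N:ℝ)-1)) /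
        (((k:ℝ) - 1) * p1 ^ (-(1:ℝ)/((N:ℝ)-1)) +
          (1 + p1 - ε - (k:ℝ) * p1) ^ (-(1:ℝ)/((N:ℝ)-1))))
      (Set.Ico ((1 - ε)/(k:ℝ)) ((1 - ε)/((k:ℝ) - 1))) := by
  obtain ⟨hε0, hε1⟩ := hε
  intro x hx y hy hxy
  have hN1 : (1:ℝ) ≤ (N:ℝ) - 1 := by
    have : (2:ℝ) ≤ (N:ℝ) := by exact_mod_cast hN
    linarith
  have hk3 : (3:ℝ) ≤ (k:ℝ) := by exact_mod_cast hk
  have hk1 : (0:ℝ) < (k:ℝ) - 1 := by linarith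
  have hc : (0:ℝ) < 1 - ε := by linarith
  have hαneg : -(1:ℝ)/((N:ℝ)-1) < 0 := by
    apply div_neg_of_neg_of_pos <;> linarith
  have hxpos : 0 < x := lt_of_lt_of_le (div_pos hc (by linarith)) hx.1
  have hypos : 0 < y := lt_trans hxpos hxy
  have hqy : 0 < 1 + y - ε - (k:ℝ) * y := by
    have h2 := (lt_div_iff₀ hk1).mp hy.2
    nlinarith
  have hqx : 0 < 1 + x - ε - (k:ℝ) * x := by
    have h2 := (lt_div_iff₀ hk1).mp (hxy.trans_le hy.2.le)
    nlinarith
  set α : ℝ := -(1:ℝ)/((N:ℝ)-1) with hα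
  set Ax : ℝ := ((k:ℝ) - 1) * x ^ α with hAx
  set Ay : ℝ := ((k:ℝ) - 1) * y ^ α with hAy
  set Bx : ℝ := (1 + x - ε - (k:ℝ) * x) ^ α with hBx
  set By : ℝ := (1 + y - ε - (k:ℝ) * y) ^ α with hBy
  have hAxpos : 0 < Ax := mul_pos hk1 (Real.rpow_pos_of_pos hxpos α)
  have hAypos : 0 < Ay := mul_pos hk1 (Real.rpow_pos_of_pos hypos α)
  have hBxpos : 0 < Bx := Real.rpow_pos_of_pos hqx α
  have hBypos : 0 < By := Real.rpow_pos_of_pos hqy α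
  simp only
  have key : Ay * Bx < Ax * By := by
    have hbase : x * (1 + y - ε - (k:ℝ) * y) < y * (1 + x - ε - (k:ℝ) * x) := by
      nlinarith
    have hbasepos : 0 < x * (1 + y - ε - (k:ℝ) * y) := mul_pos hxpos hqy
    have h := Real.rpow_lt_rpow_of_neg hbasepos hbase hαneg
    rw [Real.mul_rpow hxpos.le hqy.le, Real.mul_rpow hypos.le hqx.le] at h
    calc Ay * Bx = ((k:ℝ) - 1) * (y ^ α * (1 + x - ε - (k:ℝ) * x) ^ α) := by ring
    _ < ((k:ℝ) - 1) * (x ^ α * (1 + y - ε - (k:ℝ) * y) ^ α) := by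
        exact (mul_lt_mul_iff_right₀ hk1).mpr h
    _ = Ax * By := by ring
  have h1 : Ay / (Ay + By) < Ax / (Ax + Bx) := by
    rw [div_lt_div_iff₀ (by linarith) (by linarith)]
    nlinarith
  linarith
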